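/- Let p > 1 and ε > 0. The function f(n) = n / (log₂(n+2) · (log₂ log₂(n+2))^{1+ε})^{1/p} satisfies property (C_p), i.e. the sum over n ≥ 1 of (1/n)·(f(n)/n)^p converges. -/

import Mathlib

open Real

noncomputable def Laux (n : ℕ) : ℝ := Real.logb 2 ((n:ℝ) + 3)
noncomputable def uaux (n : ℕ) : ℝ := Real.logb 2 (Laux n)

lemma Laux_gt_one (n : ℕ) : 1 < Laux n := by
  have h : Real.logb 2 2 < Real.logb 2 ((n:ℝ) + 3) :=
    Real.logb_lt_logb one_lt_two (by norm_num) (by have := n.cast_nonneg (α := ℝ); linarith)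
  simpa [Real.logb_self_eq_one, Laux] using h

lemma Laux_mono (n : ℕ) : Laux n ≤ Laux (n+1) := by
  apply Real.logb_le_logb_of_le one_lt_two (by positivity)
  push_cast; linarith

lemma uaux_pos (n : ℕ) : 0 < uaux n := Real.logb_pos one_lt_two (Laux_gt_one n)

lemma uaux_mono (n : ℕ) : uaux n ≤ uaux (n+1) :=
  Real.logb_le_logb_of_le one_lt_two (by linarith [Laux_gt_one n]) (Laux_mono n)

lemma aux_log_diff {A B : ℝ} (hB : 0 < B) (hBA : B ≤ A) :
    (A - B) / A ≤ Real.log A - Real.log B := by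
  have hA : 0 < A := lt_of_lt_of_le hB hBA
  have h := Real.log_le_sub_one_of_pos (show 0 < B / A by positivity)
  rw [Real.log_div hB.ne' hA.ne'] at h
  have e : (A - B) / A = 1 - B / A := by field_simp
  rw [e]; linarith

lemma aux_rpow_diff {ε a b : ℝ} (hε : 0 < ε) (ha : 0 < a) (hab : a ≤ b) :
    ε * (b - a) / (b ^ ε * b) ≤ a ^ (-ε) - b ^ (-ε) := by
  have hb : 0 < b := lt_of_lt_of_le ha hab
  set t := a / b with ht
  have ht0 : 0 < t := by positivity
  have hlog : Real.log t ≤ t - 1 := Real.log_le_sub_one_of_pos ht0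
  have hexp : 1 + Real.log t * (-ε) ≤ Real.exp (Real.log t * (-ε)) := by
    linarith [Real.add_one_le_exp (Real.log t * (-ε))]
  have hrpow : t ^ (-ε) = Real.exp (Real.log t * (-ε)) := Real.rpow_def_of_pos ht0 _
  have key : 1 + ε * (1 - t) ≤ t ^ (-ε) := by
    rw [hrpow]; nlinarith
  have hbε : (0:ℝ) < b ^ (-ε) := Real.rpow_pos_of_pos hb _
  have hbε' : (0:ℝ) < b ^ ε := Real.rpow_pos_of_pos hb _
  have hsplit : a ^ (-ε) = t ^ (-ε) * b ^ (-ε) := by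
    rw [ht, Real.div_rpow ha.le hb.le, div_mul_cancel₀ _ hbε.ne']
  have h2 : (1 + ε * (1 - t)) * b ^ (-ε) ≤ t ^ (-ε) * b ^ (-ε) :=
    mul_le_mul_of_nonneg_right key hbε.le
  have e : ε * (1 - t) * b ^ (-ε) = ε * (b - a) / (b ^ ε * b) := by
    rw [Real.rpow_neg hb.le, ht, eq_div_iff (by positivity : (b:ℝ) ^ ε * b ≠ 0)]
    field_simp
  rw [hsplit]
  nlinarith [h2, e]

lemma aux_key (ε : ℝ) (hε : 0 < ε) (n : ℕ) :
    1 / ((((n:ℕ):ℝ) + 2) * (Laux (n+1) * uaux (n+1) ^ (1 + ε)))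
      ≤ (2 * Real.log 2 ^ 2 / ε) * (uaux n ^ (-ε) - uaux (n+1) ^ (-ε)) := by
  have hlog2 : 0 < Real.log 2 := Real.log_pos one_lt_two
  have hL0 := Laux_gt_one n
  have hL1 := Laux_gt_one (n+1)
  have hu0 := uaux_pos n
  have hu1 := uaux_pos (n+1)
  have hw : 0 ≤ uaux (n+1) - uaux n := by linarith [uaux_mono n]
  have hX : 0 < uaux (n+1) ^ ε := Real.rpow_pos_of_pos hu1 _
  -- log difference for the outer scale
  have hlogd : 1/((n:ℝ)+4) ≤ Real.log ((n:ℝ)+4) - Real.log ((n:ℝ)+3) := by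
    have h1 := aux_log_diff (show (0:ℝ) < (n:ℝ)+3 by positivity)
      (show ((n:ℝ)+3 : ℝ) ≤ (n:ℝ)+4 by linarith)
    have e1 : ((n:ℝ)+4 - ((n:ℝ)+3)) / ((n:ℝ)+4) = 1/((n:ℝ)+4) := by ring
    rwa [e1] at h1
  have hlogd' : 1 ≤ (Real.log ((n:ℝ)+4) - Real.log ((n:ℝ)+3)) * ((n:ℝ)+4) := by
    rw [div_le_iff₀ (by positivity)] at hlogd
    linarith
  have eL : (Laux (n+1) - Laux n) * Real.log 2
      = Real.log ((n:ℝ)+4) - Real.log ((n:ℝ)+3) := by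
    have a4 : ((n+1:ℕ):ℝ) + 3 = (n:ℝ) + 4 := by push_cast; ring
    simp only [Laux, Real.logb, a4]
    field_simp
  have h1 : 1 ≤ (Laux (n+1) - Laux n) * (((n:ℝ)+4) * Real.log 2) := by
    calc (1:ℝ) ≤ (Real.log ((n:ℝ)+4) - Real.log ((n:ℝ)+3)) * ((n:ℝ)+4) := hlogd'
    _ = ((Laux (n+1) - Laux n) * Real.log 2) * ((n:ℝ)+4) := by rw [eL]
    _ = (Laux (n+1) - Laux n) * (((n:ℝ)+4) * Real.log 2) := by ring
  -- log difference for the inner scale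
  have h2 := aux_log_diff (show (0:ℝ) < Laux n by linarith) (Laux_mono n)
  have eu : (uaux (n+1) - uaux n) * Real.log 2
      = Real.log (Laux (n+1)) - Real.log (Laux n) := by
    simp only [uaux, Real.logb]
    field_simp
  have h2' : Laux (n+1) - Laux n ≤ ((uaux (n+1) - uaux n) * Real.log 2) * Laux (n+1) := by
    rw [div_le_iff₀ (by linarith)] at h2
    rw [eu]
    linarith
  -- combined : 1 ≤ (u1 - u0) * (log2^2 * (L1 * (n+4)))
  have F : (1:ℝ) ≤ (uaux (n+1) - uaux n) * (Real.log 2^2 * (Laux (n+1) * ((n:ℝ)+4))) := by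
    have hpos : (0:ℝ) ≤ ((n:ℝ)+4) * Real.log 2 := by positivity
    have := mul_le_mul_of_nonneg_right h2' hpos
    calc (1:ℝ) ≤ (Laux (n+1) - Laux n) * (((n:ℝ)+4) * Real.log 2) := h1
    _ ≤ (((uaux (n+1) - uaux n) * Real.log 2) * Laux (n+1)) * (((n:ℝ)+4) * Real.log 2) := this
    _ = (uaux (n+1) - uaux n) * (Real.log 2^2 * (Laux (n+1) * ((n:ℝ)+4))) := by ring
  -- rpow convexity
  have F4 := aux_rpow_diff hε hu0 (uaux_mono n)
  set D := uaux n ^ (-ε) - uaux (n+1) ^ (-ε) with hD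
  have G2 : ε * (uaux (n+1) - uaux n) ≤ D * (uaux (n+1) ^ ε * uaux (n+1)) := by
    rw [div_le_iff₀ (by positivity)] at F4
    linarith
  have hDpos : 0 ≤ D := by
    have h5 : uaux n ^ ε ≤ uaux (n+1) ^ ε :=
      Real.rpow_le_rpow hu0.le (uaux_mono n) hε.le
    have h6 : (uaux (n+1) ^ ε)⁻¹ ≤ (uaux n ^ ε)⁻¹ := by
      apply inv_anti₀ (Real.rpow_pos_of_pos hu0 _) h5
    rw [hD, Real.rpow_neg hu0.le, Real.rpow_neg hu1.le]
    linarith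
  -- assemble
  have hchain : ε ≤ D * (uaux (n+1) ^ ε * uaux (n+1))
      * (Real.log 2^2 * (Laux (n+1) * (2 * ((n:ℝ)+2)))) := by
    have hK : (0:ℝ) ≤ Real.log 2^2 * (Laux (n+1) * ((n:ℝ)+4)) := by positivity
    have s1 : ε ≤ (ε * (uaux (n+1) - uaux n)) * (Real.log 2^2 * (Laux (n+1) * ((n:ℝ)+4))) := by
      have := mul_le_mul_of_nonneg_left F hε.le
      calc ε = ε * 1 := by ring
      _ ≤ ε * ((uaux (n+1) - uaux n) * (Real.log 2^2 * (Laux (n+1) * ((n:ℝ)+4)))) := this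
      _ = (ε * (uaux (n+1) - uaux n)) * (Real.log 2^2 * (Laux (n+1) * ((n:ℝ)+4))) := by ring
    have s2 := mul_le_mul_of_nonneg_right G2 hK
    have s3 : D * (uaux (n+1) ^ ε * uaux (n+1)) * (Real.log 2^2 * (Laux (n+1) * ((n:ℝ)+4)))
        ≤ D * (uaux (n+1) ^ ε * uaux (n+1)) * (Real.log 2^2 * (Laux (n+1) * (2*((n:ℝ)+2)))) := by
      apply mul_le_mul_of_nonneg_left _ (by positivity)
      apply mul_le_mul_of_nonneg_left _ (by positivity)
      apply mul_le_mul_of_nonneg_left _ (by linarith)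
      linarith
    linarith
  -- finish
  have hXe : uaux (n+1) ^ (1+ε) = uaux (n+1) * uaux (n+1) ^ ε := by
    rw [Real.rpow_add hu1, Real.rpow_one]
  rw [hXe]
  have hC : (2 * Real.log 2 ^ 2 / ε) * D = (2 * Real.log 2 ^ 2 * D) / ε := by ring
  rw [hC]
  rw [div_le_div_iff₀ (by positivity) hε]
  calc 1 * ε = ε := by ring
  _ ≤ D * (uaux (n+1) ^ ε * uaux (n+1)) * (Real.log 2^2 * (Laux (n+1) * (2 * ((n:ℝ)+2)))) := hchain
  _ = 2 * Real.log 2 ^ 2 * D * (((n:ℝ)+2) * (Laux (n+1) * (uaux (n+1) * uaux (n+1) ^ ε))) := by ring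

lemma aux_summable (ε : ℝ) (hε : 0 < ε) :
    Summable (fun n : ℕ => (1 / ((n:ℝ) + 1)) * (Laux n * uaux n ^ (1 + ε))⁻¹) := by
  have hlog2 : 0 < Real.log 2 := Real.log_pos one_lt_two
  have hC : 0 < 2 * Real.log 2 ^ 2 / ε := by positivity
  set g : ℕ → ℝ := fun n : ℕ => (1 / ((n:ℝ) + 1)) * (Laux n * uaux n ^ (1 + ε))⁻¹ with hg
  have hg0 : ∀ n, 0 ≤ g n := by
    intro n
    have h1 := Laux_gt_one n
    have h2 : (0:ℝ) ≤ uaux n ^ (1+ε) := Real.rpow_nonneg (uaux_pos n).le _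
    apply mul_nonneg (by positivity)
    exact inv_nonneg.2 (mul_nonneg (by linarith) h2)
  have hterm : ∀ i : ℕ, g (i+1)
      ≤ (2 * Real.log 2 ^ 2 / ε) * (uaux i ^ (-ε) - uaux (i+1) ^ (-ε)) := by
    intro i
    have hk := aux_key ε hε i
    have e : g (i+1)
        = 1 / ((((i:ℕ):ℝ) + 2) * (Laux (i+1) * uaux (i+1) ^ (1 + ε))) := by
      show (1 / (((i+1:ℕ):ℝ) + 1)) * (Laux (i+1) * uaux (i+1) ^ (1 + ε))⁻¹
        = 1 / ((((i:ℕ):ℝ) + 2) * (Laux (i+1) * uaux (i+1) ^ (1 + ε)))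
      push_cast
      rw [one_div, one_div, ← mul_inv]
      ring_nf
    rw [e]
    exact hk
  have hmono : ∀ i : ℕ, 0 ≤ uaux i ^ (-ε) - uaux (i+1) ^ (-ε) := by
    intro i
    have h5 : uaux i ^ ε ≤ uaux (i+1) ^ ε :=
      Real.rpow_le_rpow (uaux_pos i).le (uaux_mono i) hε.le
    have h6 : (uaux (i+1) ^ ε)⁻¹ ≤ (uaux i ^ ε)⁻¹ :=
      inv_anti₀ (Real.rpow_pos_of_pos (uaux_pos i) _) h5
    rw [Real.rpow_neg (uaux_pos i).le, Real.rpow_neg (uaux_pos (i+1)).le]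
    linarith
  apply summable_of_sum_range_le (c := g 0 + (2 * Real.log 2 ^ 2 / ε) * (uaux 0 ^ (-ε))) hg0
  intro n
  have hu0nn : (0:ℝ) ≤ uaux 0 ^ (-ε) := Real.rpow_nonneg (uaux_pos 0).le _
  cases n with
  | zero =>
    simp only [Finset.range_zero, Finset.sum_empty]
    have := mul_nonneg hC.le hu0nn
    have := hg0 0
    linarith
  | succ m =>
    rw [Finset.sum_range_succ']
    have hsum : ∑ i ∈ Finset.range m, g (i+1)
        ≤ ∑ i ∈ Finset.range m,
            (2 * Real.log 2 ^ 2 / ε) * (uaux i ^ (-ε) - uaux (i+1) ^ (-ε)) :=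
      Finset.sum_le_sum (fun i _ => hterm i)
    rw [← Finset.mul_sum, Finset.sum_range_sub' (fun i => uaux i ^ (-ε))] at hsum
    have hmn : (0:ℝ) ≤ uaux m ^ (-ε) := Real.rpow_nonneg (uaux_pos m).le _
    have h8 := mul_nonneg hC.le hmn
    rw [mul_sub] at hsum
    linarith

/-- For `p > 1`, `ε > 0`, the function
`f n = n / (log₂(n+2) · (log₂ log₂ (n+2))^(1+ε))^(1/p)` satisfies property (C_p):
`∑_{n ≥ 1} (1/n) (f n / n)^p < ∞`. -/
theorem stmt1 (p ε : ℝ) (hp : 1 < p) (hε : 0 < ε) (f : ℕ → ℝ)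
    (hf : ∀ n : ℕ, f n = (n : ℝ) /
      ((Real.logb 2 ((n : ℝ) + 2) *
        (Real.logb 2 (Real.logb 2 ((n : ℝ) + 2))) ^ (1 + ε)) ^ (1 / p))) :
    Summable (fun n : ℕ => (1 / ((n : ℝ) + 1)) * (f (n + 1) / ((n : ℝ) + 1)) ^ p) := by
  have hp0 : (0:ℝ) < p := by linarith
  have hterm : ∀ n : ℕ, (1 / ((n:ℝ) + 1)) * (Laux n * uaux n ^ (1 + ε))⁻¹
      = (1 / ((n : ℝ) + 1)) * (f (n + 1) / ((n : ℝ) + 1)) ^ p := by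
    intro n
    have hL := Laux_gt_one n
    have hu := uaux_pos n
    have hA : 0 < Laux n * uaux n ^ (1 + ε) := by
      have h2 : 0 < uaux n ^ (1+ε) := Real.rpow_pos_of_pos hu _
      nlinarith
    have hfn : f (n+1) = ((n:ℝ)+1) / (Laux n * uaux n ^ (1+ε)) ^ (1/p) := by
      rw [hf (n+1)]
      have a3 : ((n+1:ℕ):ℝ) + 2 = (n:ℝ) + 3 := by push_cast; ring
      rw [a3]
      simp only [Laux, uaux]
      push_cast
      ring_nf
    have hX : 0 < (Laux n * uaux n ^ (1+ε)) ^ (1/p) := Real.rpow_pos_of_pos hA _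
    have e1 : f (n+1) / ((n:ℝ)+1) = ((Laux n * uaux n ^ (1+ε)) ^ (1/p))⁻¹ := by
      rw [hfn]
      have hn1 : ((n:ℝ)+1) ≠ 0 := by positivity
      field_simp
    have e2 : (((Laux n * uaux n ^ (1+ε)) ^ (1/p))⁻¹) ^ p = (Laux n * uaux n ^ (1+ε))⁻¹ := by
      rw [Real.inv_rpow (Real.rpow_nonneg hA.le _), ← Real.rpow_mul hA.le,
        one_div_mul_cancel hp0.ne', Real.rpow_one]
    rw [e1, e2]
  exact Summable.congr (aux_summable ε hε) hterm
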